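/- For every n ≥ 2, the maximum size of an independent set in the edge-clique graph of the cocktail party graph cp(n) equals 4. -/

import Mathlib

open SimpleGraph

/-- The cocktail party graph `cp n`: complement of a perfect matching on `2n`
vertices; vertex `(i, b)` is matched to `(i, !b)`. -/
def cp (n : ℕ) : SimpleGraph (Fin n × Bool) where
  Adj u v := u.1 ≠ v.1
  symm := ⟨fun _ _ h => h.symm⟩
  loopless := ⟨fun _ h => h rfl⟩

/-- `A` is an independent set of edges of `G` (an independent set in the
edge-clique graph `K_e(G)`): no two members lie in a common clique. -/
def EdgeIndep {V : Type*} (G : SimpleGraph V) (A : Set (Sym2 V)) : Prop :=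
  A ⊆ G.edgeSet ∧
    A.Pairwise fun e f => ¬ G.IsClique {x | x ∈ e ∨ x ∈ f}

/-- `α'(G) = α(K_e(G))`, the maximum size of an independent set of edges. -/
noncomputable def alphaPrime {V : Type*} (G : SimpleGraph V) : ℕ :=
  sSup {k | ∃ A : Finset (Sym2 V), EdgeIndep G ↑A ∧ A.card = k}

/-- For `n ≥ 2`, `α(K_e(cp(n))) = 4`. -/
lemma mem_same_idx {n : ℕ} {e : Sym2 (Fin n × Bool)} (he : e ∈ (cp n).edgeSet)
    {i : Fin n} {a b : Bool} (ha : (i, a) ∈ e) (hb : (i, b) ∈ e) : a = b := by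
  induction e using Sym2.inductionOn with
  | hf u v =>
    rw [SimpleGraph.mem_edgeSet] at he
    rw [Sym2.mem_iff] at ha hb
    rcases ha with h | h <;> rcases hb with h' | h'
    · exact congrArg Prod.snd (h.trans h'.symm)
    · exact absurd (show u.1 = v.1 by rw [← h, ← h']) he
    · exact absurd (show u.1 = v.1 by rw [← h', ← h]) he
    · exact congrArg Prod.snd (h.trans h'.symm)

lemma shape {n : ℕ} {e : Sym2 (Fin n × Bool)} (he : e ∈ (cp n).edgeSet)
    {i : Fin n} {c : Bool} (h : (i, c) ∈ e) :
    ∃ k d, k ≠ i ∧ e = s((i, c), (k, d)) := by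
  induction e using Sym2.inductionOn with
  | hf u v =>
    rw [SimpleGraph.mem_edgeSet] at he
    rw [Sym2.mem_iff] at h
    rcases h with h | h
    · refine ⟨v.1, v.2, ?_, by rw [← h]⟩
      rw [← h] at he; exact fun hv => he hv.symm
    · refine ⟨u.1, u.2, ?_, by rw [← h, Sym2.eq_swap]⟩
      rw [← h] at he; exact he

lemma conflict_of {n : ℕ} {A : Finset (Sym2 (Fin n × Bool))} (hA : EdgeIndep (cp n) ↑A)
    {e f : Sym2 (Fin n × Bool)} (he : e ∈ A) (hf : f ∈ A) (hef : e ≠ f) :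
    ∃ i b, (i, b) ∈ e ∧ (i, !b) ∈ f := by
  have hcl := hA.2 (Finset.mem_coe.mpr he) (Finset.mem_coe.mpr hf) hef
  have hee : e ∈ (cp n).edgeSet := hA.1 (Finset.mem_coe.mpr he)
  have hfe : f ∈ (cp n).edgeSet := hA.1 (Finset.mem_coe.mpr hf)
  simp only [SimpleGraph.isClique_iff, Set.Pairwise, Set.mem_setOf_eq] at hcl
  push_neg at hcl
  obtain ⟨x, hx, y, hy, hxy, hadj⟩ := hcl
  have hfst : x.1 = y.1 := by
    by_contra hne; exact hadj hne
  have hsnd : x.2 ≠ y.2 := fun h => hxy (Prod.ext hfst h)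
  obtain ⟨x1, x2⟩ := x
  obtain ⟨y1, y2⟩ := y
  simp only at hfst hsnd
  subst hfst
  have hy2 : y2 = !x2 := by
    cases x2 <;> cases y2 <;> simp_all
  subst hy2
  rcases hx with hx | hx <;> rcases hy with hy | hy
  · exact absurd (mem_same_idx hee hx hy) (by simp)
  · exact ⟨x1, x2, hx, hy⟩
  · exact ⟨x1, !x2, hy, by simpa using hx⟩
  · exact absurd (mem_same_idx hfe hx hy) (by simp)

lemma key {n : ℕ} {A : Finset (Sym2 (Fin n × Bool))} (hA : EdgeIndep (cp n) ↑A)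
    {i j : Fin n} {a b : Bool} (hij : i ≠ j)
    (he1 : s((i, a), (j, b)) ∈ A)
    {f g : Sym2 (Fin n × Bool)} (hf : f ∈ A) (hg : g ∈ A)
    (hfg : f ≠ g) (hfe : f ≠ s((i, a), (j, b))) (hge : g ≠ s((i, a), (j, b)))
    (hif : (i, !a) ∈ f) (hig : (i, !a) ∈ g)
    {h : Sym2 (Fin n × Bool)} (hh : h ∈ A) (hh1 : h ≠ s((i, a), (j, b)))
    (hhf : h ≠ f) (hhg : h ≠ g) :
    h = s((i, a), (j, !b)) := by
  have hfE : f ∈ (cp n).edgeSet := hA.1 (Finset.mem_coe.mpr hf)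
  have hgE : g ∈ (cp n).edgeSet := hA.1 (Finset.mem_coe.mpr hg)
  have hhE : h ∈ (cp n).edgeSet := hA.1 (Finset.mem_coe.mpr hh)
  obtain ⟨k, c, hki, hfeq⟩ := shape hfE hif
  -- determine g = s((i,!a),(k,!c))
  have hgeq : (k, !c) ∈ g := by
    obtain ⟨m, t, hmf, hmg⟩ := conflict_of hA hf hg hfg
    rw [hfeq, Sym2.mem_iff] at hmf
    rcases hmf with hm | hm
    · -- (m,t) = (i,!a); then (i,a) ∈ g, contradiction with (i,!a) ∈ g
      obtain ⟨rfl, rfl⟩ := Prod.mk.injEq .. ▸ hm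
      exact absurd (mem_same_idx hgE hig (by simpa using hmg)) (by simp)
    · obtain ⟨rfl, rfl⟩ := Prod.mk.injEq .. ▸ hm
      exact hmg
  -- h contains (i,a)
  have hia : (i, a) ∈ h := by
    obtain ⟨m, t, hmf, hmh⟩ := conflict_of hA hf hh hhf.symm
    rw [hfeq, Sym2.mem_iff] at hmf
    rcases hmf with hm | hm
    · obtain ⟨rfl, rfl⟩ := Prod.mk.injEq .. ▸ hm
      simpa using hmh
    · have hkch : (k, !c) ∈ h := by
        rw [show m = k from congrArg Prod.fst hm, show t = c from congrArg Prod.snd hm] at hmh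
        exact hmh
      obtain ⟨m', t', hmg, hmh'⟩ := conflict_of hA hg hh hhg.symm
      have hgform : g = s((i, !a), (k, !c)) :=
        (Sym2.mem_and_mem_iff (fun hc => hki (congrArg Prod.fst hc).symm)).mp ⟨hig, hgeq⟩
      rw [hgform, Sym2.mem_iff] at hmg
      rcases hmg with hm' | hm'
      · obtain ⟨rfl, rfl⟩ := Prod.mk.injEq .. ▸ hm'
        simpa using hmh'
      · obtain ⟨rfl, rfl⟩ := Prod.mk.injEq .. ▸ hm'
        exact absurd (mem_same_idx hhE hkch (by simpa using hmh')) (by simp)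
  -- h contains (j,!b)
  have hjb : (j, !b) ∈ h := by
    obtain ⟨m, t, hme, hmh⟩ := conflict_of hA he1 hh hh1.symm
    rw [Sym2.mem_iff] at hme
    rcases hme with hm | hm
    · obtain ⟨rfl, rfl⟩ := Prod.mk.injEq .. ▸ hm
      exact absurd (mem_same_idx hhE hia hmh) (by simp)
    · obtain ⟨rfl, rfl⟩ := Prod.mk.injEq .. ▸ hm
      exact hmh
  have hne : ((i, a) : Fin n × Bool) ≠ (j, !b) := fun hc => hij (congrArg Prod.fst hc)
  exact ((Sym2.mem_and_mem_iff hne).mp ⟨hia, hjb⟩)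

lemma shape2 {n : ℕ} {e : Sym2 (Fin n × Bool)} (he : e ∈ (cp n).edgeSet) :
    ∃ i j a b, i ≠ j ∧ e = s((i, a), (j, b)) := by
  induction e using Sym2.inductionOn with
  | hf u v =>
    rw [SimpleGraph.mem_edgeSet] at he
    exact ⟨u.1, v.1, u.2, v.2, he, rfl⟩

lemma card4le {α : Type*} [DecidableEq α] (a b c d : α) :
    ({a, b, c, d} : Finset α).card ≤ 4 := by
  have h1 := Finset.card_insert_le a ({b, c, d} : Finset α)
  have h2 := Finset.card_insert_le b ({c, d} : Finset α)
  have h3 := Finset.card_insert_le c ({d} : Finset α)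
  have h4 : ({d} : Finset α).card = 1 := Finset.card_singleton d
  omega

lemma card_le_four {n : ℕ} (A : Finset (Sym2 (Fin n × Bool))) (hA : EdgeIndep (cp n) ↑A) :
    A.card ≤ 4 := by
  classical
  rcases A.eq_empty_or_nonempty with rfl | ⟨e1, he1⟩
  · simp
  obtain ⟨i, j, a, b, hij, he⟩ := shape2 (hA.1 (Finset.mem_coe.mpr he1))
  subst he
  set E := s((i, a), (j, b)) with hE
  set P := A.filter (fun f => (i, !a) ∈ f ∧ f ≠ E) with hPdef
  set Q := A.filter (fun f => (j, !b) ∈ f ∧ f ≠ E) with hQdef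
  have hsub0 : A ⊆ insert E (P ∪ Q) := by
    intro f hf
    by_cases hfe : f = E
    · subst hfe; exact Finset.mem_insert_self _ _
    obtain ⟨m, t, hme, hmf⟩ := conflict_of hA he1 hf (fun hc => hfe hc.symm)
    rw [Sym2.mem_iff] at hme
    refine Finset.mem_insert_of_mem (Finset.mem_union.mpr ?_)
    rcases hme with hm | hm
    · refine Or.inl (Finset.mem_filter.mpr ⟨hf, ?_, hfe⟩)
      rw [show m = i from congrArg Prod.fst hm, show t = a from congrArg Prod.snd hm] at hmf
      exact hmf
    · refine Or.inr (Finset.mem_filter.mpr ⟨hf, ?_, hfe⟩)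
      rw [show m = j from congrArg Prod.fst hm, show t = b from congrArg Prod.snd hm] at hmf
      exact hmf
  by_cases hP : ∃ f ∈ P, ∃ g ∈ P, f ≠ g
  · obtain ⟨f, hfP, g, hgP, hfg⟩ := hP
    obtain ⟨hfA, hif, hfE⟩ := Finset.mem_filter.mp hfP
    obtain ⟨hgA, hig, hgE⟩ := Finset.mem_filter.mp hgP
    have hsub : A ⊆ {E, f, g, s((i, a), (j, !b))} := by
      intro h hh
      by_cases h1 : h = E
      · simp [h1]
      by_cases h2 : h = f
      · simp [h2]
      by_cases h3 : h = g
      · simp [h3]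
      have := key hA hij he1 hfA hgA hfg hfE hgE hif hig hh h1 h2 h3
      simp [this]
    exact le_trans (Finset.card_le_card hsub) (card4le _ _ _ _)
  · by_cases hQ : ∃ f ∈ Q, ∃ g ∈ Q, f ≠ g
    · obtain ⟨f, hfQ, g, hgQ, hfg⟩ := hQ
      obtain ⟨hfA, hjf, hfE⟩ := Finset.mem_filter.mp hfQ
      obtain ⟨hgA, hjg, hgE⟩ := Finset.mem_filter.mp hgQ
      have hswap : E = s((j, b), (i, a)) := Sym2.eq_swap
      have he1' : s((j, b), (i, a)) ∈ A := hswap ▸ he1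
      have hfE' : f ≠ s((j, b), (i, a)) := hswap ▸ hfE
      have hgE' : g ≠ s((j, b), (i, a)) := hswap ▸ hgE
      have hsub : A ⊆ {E, f, g, s((j, b), (i, !a))} := by
        intro h hh
        by_cases h1 : h = E
        · simp [h1]
        by_cases h2 : h = f
        · simp [h2]
        by_cases h3 : h = g
        · simp [h3]
        have h1' : h ≠ s((j, b), (i, a)) := hswap ▸ h1
        have := key hA hij.symm he1' hfA hgA hfg hfE' hgE' hjf hjg hh h1' h2 h3
        simp [this]
      exact le_trans (Finset.card_le_card hsub) (card4le _ _ _ _)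
    · push_neg at hP hQ
      have hPc : P.card ≤ 1 := Finset.card_le_one.mpr hP
      have hQc : Q.card ≤ 1 := Finset.card_le_one.mpr hQ
      have h1 := Finset.card_le_card hsub0
      have h2 := Finset.card_insert_le E (P ∪ Q)
      have h3 := Finset.card_union_le P Q
      omega

lemma nc {n : ℕ} {e f : Sym2 (Fin n × Bool)} (i : Fin n) (b : Bool)
    (h1 : (i, b) ∈ e ∨ (i, b) ∈ f) (h2 : (i, !b) ∈ e ∨ (i, !b) ∈ f) :
    ¬ (cp n).IsClique {x | x ∈ e ∨ x ∈ f} := by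
  intro hcl
  have := hcl (show ((i, b) : Fin n × Bool) ∈ {x | x ∈ e ∨ x ∈ f} from h1)
    (show ((i, !b) : Fin n × Bool) ∈ {x | x ∈ e ∨ x ∈ f} from h2) (by simp)
  exact this rfl

/-- For `n ≥ 2`, `α(K_e(cp(n))) = 4`. -/
theorem alphaPrime_cp (n : ℕ) (hn : 2 ≤ n) : alphaPrime (cp n) = 4 := by
  classical
  have h0 : (0 : ℕ) < n := by omega
  have h1 : (1 : ℕ) < n := by omega
  set i0 : Fin n := ⟨0, h0⟩ with hi0
  set i1 : Fin n := ⟨1, h1⟩ with hi1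
  have h01 : i0 ≠ i1 := by simp [hi0, hi1, Fin.ext_iff]
  set A : Finset (Sym2 (Fin n × Bool)) :=
    {s((i0, false), (i1, false)), s((i0, false), (i1, true)),
     s((i0, true), (i1, false)), s((i0, true), (i1, true))} with hAdef
  have hAindep : EdgeIndep (cp n) ↑A := by
    constructor
    · intro e he
      simp only [hAdef, Finset.coe_insert, Set.mem_insert_iff, Finset.coe_singleton,
        Set.mem_singleton_iff] at he
      rcases he with rfl | rfl | rfl | rfl <;>
        (rw [SimpleGraph.mem_edgeSet]; exact h01)
    · intro e he f hf hef
      simp only [hAdef, Finset.coe_insert, Set.mem_insert_iff, Finset.coe_singleton,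
        Set.mem_singleton_iff] at he hf
      rcases he with rfl | rfl | rfl | rfl <;> rcases hf with rfl | rfl | rfl | rfl <;>
        first
          | exact absurd rfl hef
          | (apply nc i0 false <;> (simp; done))
          | (apply nc i0 true <;> (simp; done))
          | (apply nc i1 false <;> (simp; done))
          | (apply nc i1 true <;> (simp; done))
  have hcard : A.card = 4 := by
    rw [hAdef]
    simp [Finset.card_insert_of_notMem, Sym2.eq_iff, Prod.ext_iff, h01]
  have hmem : 4 ∈ {k | ∃ B : Finset (Sym2 (Fin n × Bool)), EdgeIndep (cp n) ↑B ∧ B.card = k} :=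
    ⟨A, hAindep, hcard⟩
  have hub : ∀ k ∈ {k | ∃ B : Finset (Sym2 (Fin n × Bool)), EdgeIndep (cp n) ↑B ∧ B.card = k},
      k ≤ 4 := by
    rintro k ⟨B, hB, rfl⟩
    exact card_le_four B hB
  unfold alphaPrime
  exact le_antisymm (csSup_le ⟨4, hmem⟩ hub) (le_csSup ⟨4, hub⟩ hmem)
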